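/- Let r > 0 and D_r(w) = (√(2r√π)/(2πr²))·exp(−‖w‖₂²/(2r²)). Define the averaged project-then-backproject kernel K : ℝ² → ℝ by K(w) = (1/(2π))·∫₀^{2π} ( ∫_{ℝ²} D_r(w − v)·L_θ[D_r](⟨u_θ^⊥, v⟩) dv ) dθ, where the inner integral is D_r convolved with the back projection of the line projection of D_r at angle θ. Then K has the inverse Fourier representation: for every w ∈ ℝ², K(w) = ∫_{ℝ²} e^{2πi⟨ξ,w⟩} · (2r/(√π·‖ξ‖₂))·exp(−4π²r²‖ξ‖₂²) dξ; in particular the Fourier multiplier of K is (2r/(√π·‖ξ‖₂))·exp(−4π²r²‖ξ‖₂²). -/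

import Mathlib

noncomputable section
open MeasureTheory

/-- Probe direction `u_θ = (cos θ, sin θ)`. -/
def uvec (θ : ℝ) : ℝ × ℝ := (Real.cos θ, Real.sin θ)

/-- Sweep direction `u_θ^⊥ = (sin θ, -cos θ)`. -/
def uperp (θ : ℝ) : ℝ × ℝ := (Real.sin θ, -Real.cos θ)

/-- Euclidean inner product on ℝ². -/
def dot2 (a b : ℝ × ℝ) : ℝ := a.1 * b.1 + a.2 * b.2

/-- Euclidean norm on ℝ². -/
def norm2 (a : ℝ × ℝ) : ℝ := Real.sqrt (a.1 ^ 2 + a.2 ^ 2)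

/-- Line projection at angle θ: `L_θ[Y](t) = ∫ Y(s·u_θ + t·u_θ^⊥) ds`. -/
def lineProj (Y : ℝ × ℝ → ℝ) (θ t : ℝ) : ℝ := ∫ s : ℝ, Y (s • uvec θ + t • uperp θ)
/-- Normalized two-dimensional Gaussian of width `r`, whose line projections have unit
`L²(ℝ)` norm. -/
def gauss (r : ℝ) (w : ℝ × ℝ) : ℝ :=
  (Real.sqrt (2 * r * Real.sqrt Real.pi) / (2 * Real.pi * r ^ 2)) *
    Real.exp (-(norm2 w) ^ 2 / (2 * r ^ 2))

/-- The averaged project-then-backproject kernel `K` for the Gaussian of width `r`: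
`K(w) = (1/2π) ∫₀^{2π} (D_r ∗ backproject(L_θ[D_r]))(w) dθ`. -/
def avgKernel (r : ℝ) (w : ℝ × ℝ) : ℝ :=
  (1 / (2 * Real.pi)) * ∫ θ in (0 : ℝ)..(2 * Real.pi),
    ∫ v : ℝ × ℝ, gauss r (w - v) * lineProj (gauss r) θ (dot2 (uperp θ) v)


section Aux
open Real

def Cg (r : ℝ) : ℝ := Real.sqrt (2 * r * Real.sqrt Real.pi) / (2 * Real.pi * r ^ 2)

lemma norm2_sq (a : ℝ × ℝ) : norm2 a ^ 2 = a.1 ^ 2 + a.2 ^ 2 :=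
  Real.sq_sqrt (by positivity)

lemma gauss_eq (r : ℝ) (w : ℝ × ℝ) :
    gauss r w = Cg r * Real.exp (-(w.1 ^ 2 + w.2 ^ 2) / (2 * r ^ 2)) := by
  rw [gauss, norm2_sq]; rfl

lemma lineProj_gauss {r : ℝ} (hr : 0 < r) (θ t : ℝ) :
    lineProj (gauss r) θ t
      = Cg r * (Real.sqrt (2 * Real.pi) * r) * Real.exp (-t ^ 2 / (2 * r ^ 2)) := by
  have hkey : ∀ s : ℝ, gauss r (s • uvec θ + t • uperp θ)
      = (Cg r * Real.exp (-t ^ 2 / (2 * r ^ 2))) * Real.exp (-(1 / (2 * r ^ 2)) * s ^ 2) := by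
    intro s
    rw [gauss_eq]
    have h1 : (s • uvec θ + t • uperp θ).1 = s * Real.cos θ + t * Real.sin θ := rfl
    have h2 : (s • uvec θ + t • uperp θ).2 = s * Real.sin θ + t * (-Real.cos θ) := rfl
    rw [h1, h2, mul_assoc, ← Real.exp_add]
    have hsq : (s * Real.cos θ + t * Real.sin θ) ^ 2 + (s * Real.sin θ + t * (-Real.cos θ)) ^ 2
        = s ^ 2 + t ^ 2 := by
      linear_combination (s ^ 2 + t ^ 2) * Real.sin_sq_add_cos_sq θ
    rw [hsq]
    congr 1
    have hr2 : (2 * r ^ 2) ≠ 0 := by positivity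
    field_simp
    ring
  rw [lineProj]
  simp_rw [hkey]
  rw [MeasureTheory.integral_const_mul, integral_gaussian]
  have : Real.pi / (1 / (2 * r ^ 2)) = 2 * Real.pi * r ^ 2 := by
    field_simp
  rw [this]
  have : Real.sqrt (2 * Real.pi * r ^ 2) = Real.sqrt (2 * Real.pi) * r := by
    rw [Real.sqrt_mul (by positivity), Real.sqrt_sq hr.le]
  rw [this]; ring

def rotL (θ : ℝ) : (ℝ × ℝ) →ₗ[ℝ] (ℝ × ℝ) :=
  Matrix.toLin (Module.Basis.finTwoProd ℝ) (Module.Basis.finTwoProd ℝ)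
    !![Real.cos θ, Real.sin θ; Real.sin θ, -Real.cos θ]

lemma rotL_apply (θ : ℝ) (p : ℝ × ℝ) :
    rotL θ p = (p.1 * Real.cos θ + p.2 * Real.sin θ, p.1 * Real.sin θ - p.2 * Real.cos θ) := by
  simp [rotL, Matrix.toLin_apply, Fin.sum_univ_two, Matrix.mulVec, dotProduct,
    Module.Basis.coe_finTwoProd_repr, Module.Basis.finTwoProd_zero, Module.Basis.finTwoProd_one, Prod.ext_iff,
    Prod.smul_fst, Prod.smul_snd, smul_eq_mul]
  constructor <;> ring

lemma rotL_det (θ : ℝ) : LinearMap.det (rotL θ) = -1 := by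
  rw [rotL, LinearMap.det_toLin]
  simp [Matrix.det_fin_two_of]
  nlinarith [Real.sin_sq_add_cos_sq θ]

lemma rot_mp (θ : ℝ) : MeasurePreserving (rotL θ) (volume : Measure (ℝ × ℝ)) volume := by
  refine ⟨(rotL θ).continuous_of_finiteDimensional.measurable, ?_⟩
  rw [Measure.map_linearMap_addHaar_eq_smul_addHaar _ (by rw [rotL_det]; norm_num)]
  rw [rotL_det]
  norm_num

def rotE (θ : ℝ) : (ℝ × ℝ) ≃ₗ[ℝ] (ℝ × ℝ) :=
  LinearEquiv.ofLinear (rotL θ) (rotL θ)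
    (by
      ext <;> simp [rotL_apply] <;> nlinarith [Real.sin_sq_add_cos_sq θ])
    (by
      ext <;> simp [rotL_apply] <;> nlinarith [Real.sin_sq_add_cos_sq θ])

lemma rot_me (θ : ℝ) : MeasurableEmbedding (rotL θ) := by
  have : MeasurableEmbedding ((rotE θ).toContinuousLinearEquiv.toHomeomorph.toMeasurableEquiv) :=
    MeasurableEquiv.measurableEmbedding _
  exact this

lemma rot_integral_comp (θ : ℝ) (g : ℝ × ℝ → ℝ) :
    ∫ p : ℝ × ℝ, g (rotL θ p) = ∫ v : ℝ × ℝ, g v :=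
  (rot_mp θ).integral_comp (rot_me θ) g

lemma const_one {r : ℝ} (hr : 0 < r) :
    Cg r ^ 2 * (2 * Real.pi) * r ^ 3 * Real.sqrt Real.pi = 1 := by
  have hπ := Real.pi_pos
  have h1 : Real.sqrt (2 * r * Real.sqrt Real.pi) ^ 2 = 2 * r * Real.sqrt Real.pi :=
    Real.sq_sqrt (by positivity)
  have h2 : Real.sqrt Real.pi * Real.sqrt Real.pi = Real.pi :=
    Real.mul_self_sqrt hπ.le
  rw [Cg, div_pow, h1]
  field_simp
  nlinarith [h2, hπ, hr]

lemma conv_gauss {r : ℝ} (hr : 0 < r) (θ : ℝ) (w : ℝ × ℝ) :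
    ∫ v : ℝ × ℝ, gauss r (w - v) * lineProj (gauss r) θ (dot2 (uperp θ) v)
      = Real.exp (-(dot2 (uperp θ) w) ^ 2 / (4 * r ^ 2)) := by
  set a : ℝ := dot2 (uvec θ) w with ha
  set b : ℝ := dot2 (uperp θ) w with hb
  have hpyth := Real.sin_sq_add_cos_sq θ
  -- change of variables
  rw [← rot_integral_comp θ]
  have key : ∀ p : ℝ × ℝ, gauss r (w - rotL θ p) * lineProj (gauss r) θ (dot2 (uperp θ) (rotL θ p))
      = (fun s => Cg r * Real.exp (-(1 / (2 * r ^ 2)) * (s - a) ^ 2)) p.1 *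
        (fun t => (Cg r * (Real.sqrt (2 * Real.pi) * r)) * (Real.exp (-b ^ 2 / (4 * r ^ 2)) *
          Real.exp (-(1 / r ^ 2) * (t - b / 2) ^ 2))) p.2 := by
    rintro ⟨s, t⟩
    have hdot : dot2 (uperp θ) (rotL θ (s, t)) = t := by
      simp only [rotL_apply, dot2, uperp]
      linear_combination t * hpyth
    rw [hdot, lineProj_gauss hr, gauss_eq]
    have hcomp : (w - rotL θ (s, t)).1 ^ 2 + (w - rotL θ (s, t)).2 ^ 2
        = (s - a) ^ 2 + (t - b) ^ 2 := by
      simp only [rotL_apply, Prod.fst_sub, Prod.snd_sub, ha, hb, dot2, uvec, uperp]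
      linear_combination (s ^ 2 + t ^ 2 - w.1 ^ 2 - w.2 ^ 2) * hpyth
    have hexp1 : Real.exp (-((s - a) ^ 2 + (t - b) ^ 2) / (2 * r ^ 2))
        = Real.exp (-(1 / (2 * r ^ 2)) * (s - a) ^ 2) * Real.exp (-(1 / (2 * r ^ 2)) * (t - b) ^ 2) := by
      rw [← Real.exp_add]; congr 1; field_simp; ring
    have hexp2 : Real.exp (-(1 / (2 * r ^ 2)) * (t - b) ^ 2) * Real.exp (-t ^ 2 / (2 * r ^ 2))
        = Real.exp (-b ^ 2 / (4 * r ^ 2)) * Real.exp (-(1 / r ^ 2) * (t - b / 2) ^ 2) := by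
      rw [← Real.exp_add, ← Real.exp_add]; congr 1; field_simp; ring
    rw [hcomp, hexp1]
    linear_combination (Cg r * Real.exp (-(1 / (2 * r ^ 2)) * (s - a) ^ 2) *
      (Cg r * (Real.sqrt (2 * Real.pi) * r))) * hexp2
  simp_rw [key]
  rw [Measure.volume_eq_prod,
    MeasureTheory.integral_prod_mul (fun s : ℝ => Cg r * Real.exp (-(1 / (2 * r ^ 2)) * (s - a) ^ 2))
      (fun t : ℝ => (Cg r * (Real.sqrt (2 * Real.pi) * r)) * (Real.exp (-b ^ 2 / (4 * r ^ 2)) *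
        Real.exp (-(1 / r ^ 2) * (t - b / 2) ^ 2)))]
  have hI1 : (∫ s : ℝ, Cg r * Real.exp (-(1 / (2 * r ^ 2)) * (s - a) ^ 2))
      = Cg r * (Real.sqrt (2 * Real.pi) * r) := by
    rw [MeasureTheory.integral_const_mul]
    rw [MeasureTheory.integral_sub_right_eq_self (fun x => Real.exp (-(1 / (2 * r ^ 2)) * x ^ 2)) a]
    rw [integral_gaussian]
    have h : Real.pi / (1 / (2 * r ^ 2)) = 2 * Real.pi * r ^ 2 := by field_simp
    rw [h, Real.sqrt_mul (by positivity), Real.sqrt_sq hr.le]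
  have hI2 : (∫ t : ℝ, (Cg r * (Real.sqrt (2 * Real.pi) * r)) * (Real.exp (-b ^ 2 / (4 * r ^ 2)) *
        Real.exp (-(1 / r ^ 2) * (t - b / 2) ^ 2)))
      = (Cg r * (Real.sqrt (2 * Real.pi) * r)) * (Real.exp (-b ^ 2 / (4 * r ^ 2)) *
          (Real.sqrt Real.pi * r)) := by
    rw [MeasureTheory.integral_const_mul, MeasureTheory.integral_const_mul]
    rw [MeasureTheory.integral_sub_right_eq_self (fun x => Real.exp (-(1 / r ^ 2) * x ^ 2)) (b / 2)]
    rw [integral_gaussian]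
    have h : Real.pi / (1 / r ^ 2) = Real.pi * r ^ 2 := by field_simp
    rw [h, Real.sqrt_mul Real.pi_pos.le, Real.sqrt_sq hr.le]
  rw [hI1, hI2]
  have h2π : Real.sqrt (2 * Real.pi) * Real.sqrt (2 * Real.pi) = 2 * Real.pi :=
    Real.mul_self_sqrt (by positivity)
  have := const_one hr
  linear_combination (Real.exp (-b ^ 2 / (4 * r ^ 2)) * Cg r ^ 2 * r ^ 3 * Real.sqrt Real.pi) * h2π
    + Real.exp (-b ^ 2 / (4 * r ^ 2)) * this

lemma f_int {r : ℝ} (hr : 0 < r) (t : ℝ) :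
    Integrable (fun σ : ℝ => Complex.exp ((2 * π * (σ * t) : ℝ) * Complex.I) *
      ((2 * r / Real.sqrt π) * Real.exp (-(4 * π ^ 2 * r ^ 2 * σ ^ 2)) : ℝ)) := by
  have hg : Integrable (fun σ : ℝ => (2 * r / Real.sqrt π) * Real.exp (-(4 * π ^ 2 * r ^ 2 * σ ^ 2))) := by
    have := (integrable_exp_neg_mul_sq (show (0:ℝ) < 4 * π ^ 2 * r ^ 2 by positivity)).const_mul
      (2 * r / Real.sqrt π)
    simpa [neg_mul] using this
  have hg' : Integrable (fun σ : ℝ =>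
      (((2 * r / Real.sqrt π) * Real.exp (-(4 * π ^ 2 * r ^ 2 * σ ^ 2)) : ℝ) : ℂ)) := hg.ofReal
  refine hg'.bdd_mul (c := 1) ?_ (Filter.Eventually.of_forall fun σ => ?_)
  · apply Continuous.aestronglyMeasurable
    fun_prop
  · rw [Complex.norm_exp_ofReal_mul_I]

lemma gauss_ft {r : ℝ} (hr : 0 < r) (t : ℝ) :
    (∫ σ : ℝ, Complex.exp ((2 * π * (σ * t) : ℝ) * Complex.I) *
        ((2 * r / Real.sqrt π) * Real.exp (-(4 * π ^ 2 * r ^ 2 * σ ^ 2)) : ℝ))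
      = (((1 / π) * Real.exp (-t ^ 2 / (4 * r ^ 2)) : ℝ) : ℂ) := by
  have hπ := Real.pi_pos
  have hb : (0:ℝ) < 4 * π ^ 2 * r ^ 2 := by positivity
  have key := fourierIntegral_gaussian (b := ((4 * π ^ 2 * r ^ 2 : ℝ) : ℂ))
    (by rw [Complex.ofReal_re]; exact hb) ((2 * π * t : ℝ) : ℂ)
  have hpt : ∀ σ : ℝ, Complex.exp ((2 * π * (σ * t) : ℝ) * Complex.I) *
        (((2 * r / Real.sqrt π) * Real.exp (-(4 * π ^ 2 * r ^ 2 * σ ^ 2)) : ℝ) : ℂ)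
      = ((2 * r / Real.sqrt π : ℝ) : ℂ) *
        (Complex.exp (Complex.I * ((2 * π * t : ℝ) : ℂ) * (σ : ℝ)) *
          Complex.exp (-((4 * π ^ 2 * r ^ 2 : ℝ) : ℂ) * (σ : ℝ) ^ 2)) := by
    intro σ
    have hsplit : (((2 * r / Real.sqrt π) * Real.exp (-(4 * π ^ 2 * r ^ 2 * σ ^ 2)) : ℝ) : ℂ)
        = ((2 * r / Real.sqrt π : ℝ) : ℂ) *
            Complex.exp (((-(4 * π ^ 2 * r ^ 2 * σ ^ 2) : ℝ) : ℂ)) := by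
      push_cast [Complex.ofReal_exp]; ring
    have hexps : Complex.exp ((2 * π * (σ * t) : ℝ) * Complex.I) *
          Complex.exp (((-(4 * π ^ 2 * r ^ 2 * σ ^ 2) : ℝ) : ℂ))
        = Complex.exp (Complex.I * ((2 * π * t : ℝ) : ℂ) * (σ : ℝ)) *
          Complex.exp (-((4 * π ^ 2 * r ^ 2 : ℝ) : ℂ) * (σ : ℝ) ^ 2) := by
      rw [← Complex.exp_add, ← Complex.exp_add]
      congr 1
      push_cast
      ring
    rw [hsplit]
    linear_combination ((2 * r / Real.sqrt π : ℝ) : ℂ) * hexps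
  simp_rw [hpt]
  rw [MeasureTheory.integral_const_mul, key]
  have hπc : ((π : ℝ) : ℂ) ≠ 0 := by exact_mod_cast hπ.ne'
  have hsqrtpi : Real.sqrt π ≠ 0 := by positivity
  have h1 : ((π : ℂ) / ((4 * π ^ 2 * r ^ 2 : ℝ) : ℂ)) ^ (1 / 2 : ℂ)
      = ((Real.sqrt π / (2 * π * r) : ℝ) : ℂ) := by
    have e1 : ((π : ℂ) / ((4 * π ^ 2 * r ^ 2 : ℝ) : ℂ)) = ((π / (4 * π ^ 2 * r ^ 2) : ℝ) : ℂ) := by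
      push_cast; ring
    rw [e1, show (1 / 2 : ℂ) = ((1 / 2 : ℝ) : ℂ) by norm_num,
      ← Complex.ofReal_cpow (by positivity)]
    congr 1
    rw [← Real.sqrt_eq_rpow]
    rw [show π / (4 * π ^ 2 * r ^ 2) = (Real.sqrt π / (2 * π * r)) ^ 2 by
      rw [div_pow, Real.sq_sqrt hπ.le]; congr 1; ring]
    exact Real.sqrt_sq (by positivity)
  have h2 : -(((2 * π * t : ℝ) : ℂ)) ^ 2 / (4 * ((4 * π ^ 2 * r ^ 2 : ℝ) : ℂ))
      = ((-t ^ 2 / (4 * r ^ 2) : ℝ) : ℂ) := by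
    have e : (-(2 * π * t) ^ 2 / (4 * (4 * π ^ 2 * r ^ 2)) : ℝ) = -t ^ 2 / (4 * r ^ 2) := by
      field_simp; ring
    calc -(((2 * π * t : ℝ) : ℂ)) ^ 2 / (4 * ((4 * π ^ 2 * r ^ 2 : ℝ) : ℂ))
        = ((-(2 * π * t) ^ 2 / (4 * (4 * π ^ 2 * r ^ 2)) : ℝ) : ℂ) := by push_cast; ring
      _ = _ := by rw [e]
  rw [h1, h2, ← Complex.ofReal_exp, ← Complex.ofReal_mul, ← Complex.ofReal_mul]
  norm_cast
  have hss : Real.sqrt π * Real.sqrt π = π := Real.mul_self_sqrt hπ.le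
  field_simp

lemma rhs_repr {r : ℝ} (hr : 0 < r) (w : ℝ × ℝ) :
    (∫ ξ : ℝ × ℝ, Complex.exp ((2 * π * dot2 ξ w : ℝ) * Complex.I) *
        ((2 * r / (Real.sqrt π * norm2 ξ)) *
          Real.exp (-(4 * π ^ 2 * r ^ 2 * (norm2 ξ) ^ 2)) : ℝ))
      = ((∫ θ in (0:ℝ)..π, (1 / π) *
          Real.exp (-(w.1 * Real.cos θ + w.2 * Real.sin θ) ^ 2 / (4 * r ^ 2)) : ℝ) : ℂ) := by
  have hπ := Real.pi_pos
  set T : ℝ → ℝ := fun θ => w.1 * Real.cos θ + w.2 * Real.sin θ with hT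
  set G : ℝ × ℝ → ℂ := fun p =>
    Complex.exp ((2 * π * (p.1 * T p.2) : ℝ) * Complex.I) *
      (((2 * r / Real.sqrt π) * Real.exp (-(4 * π ^ 2 * r ^ 2 * p.1 ^ 2)) : ℝ) : ℂ) with hG
  have hGcont : Continuous G := by
    apply Continuous.mul
    · apply Complex.continuous_exp.comp
      apply Continuous.mul _ continuous_const
      apply Complex.continuous_ofReal.comp
      fun_prop
    · apply Complex.continuous_ofReal.comp
      fun_prop
  -- polar coordinates
  rw [← integral_comp_polarCoord_symm]
  have htar : polarCoord.target = Set.Ioi (0:ℝ) ×ˢ Set.Ioo (-π) π := rfl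
  have hmeas : MeasurableSet polarCoord.target := by
    rw [htar]; exact measurableSet_Ioi.prod measurableSet_Ioo
  have hstep : Set.EqOn (fun p : ℝ × ℝ => p.1 •
      (Complex.exp ((2 * π * dot2 (polarCoord.symm p) w : ℝ) * Complex.I) *
        ((2 * r / (Real.sqrt π * norm2 (polarCoord.symm p))) *
          Real.exp (-(4 * π ^ 2 * r ^ 2 * (norm2 (polarCoord.symm p)) ^ 2)) : ℝ))) G
      polarCoord.target := by
    rintro ⟨σ, θ⟩ hp
    rw [htar] at hp
    obtain ⟨hσ, -⟩ := hp
    have hσ0 : (0:ℝ) < σ := hσ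
    have hsymm : polarCoord.symm (σ, θ) = (σ * Real.cos θ, σ * Real.sin θ) := rfl
    have hnorm : norm2 (polarCoord.symm (σ, θ)) = σ := by
      rw [hsymm, norm2]
      have : (σ * Real.cos θ) ^ 2 + (σ * Real.sin θ) ^ 2 = σ ^ 2 := by
        linear_combination σ ^ 2 * Real.sin_sq_add_cos_sq θ
      rw [this, Real.sqrt_sq hσ0.le]
    have hdot : dot2 (polarCoord.symm (σ, θ)) w = σ * T θ := by
      rw [hsymm, dot2, hT]; dsimp; ring
    simp only [hnorm, hdot, hG]
    rw [Complex.real_smul, mul_left_comm, ← Complex.ofReal_mul]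
    congr 1
    have hx : σ * (2 * r / (Real.sqrt π * σ) * Real.exp (-(4 * π ^ 2 * r ^ 2 * σ ^ 2)))
        = 2 * r / Real.sqrt π * Real.exp (-(4 * π ^ 2 * r ^ 2 * σ ^ 2)) := by
      rw [show σ * (2 * r / (Real.sqrt π * σ) * Real.exp (-(4 * π ^ 2 * r ^ 2 * σ ^ 2)))
          = (σ / σ) * (2 * r / Real.sqrt π * Real.exp (-(4 * π ^ 2 * r ^ 2 * σ ^ 2))) by
        field_simp]
      rw [div_self hσ0.ne', one_mul]
    exact_mod_cast hx
  rw [MeasureTheory.setIntegral_congr_fun hmeas hstep]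
  -- product measure
  have hbound : Integrable (fun p : ℝ × ℝ => (2 * r / Real.sqrt π) *
      Real.exp (-(4 * π ^ 2 * r ^ 2 * p.1 ^ 2)) * 1)
      ((volume.restrict (Set.Ioi (0:ℝ))).prod (volume.restrict (Set.Ioo (-π) π))) := by
    apply MeasureTheory.Integrable.mul_prod (L := ℝ)
      (f := fun σ : ℝ => (2 * r / Real.sqrt π) * Real.exp (-(4 * π ^ 2 * r ^ 2 * σ ^ 2)))
      (g := fun _ : ℝ => (1:ℝ))
    · apply Integrable.integrableOn
      have := (integrable_exp_neg_mul_sq (show (0:ℝ) < 4 * π ^ 2 * r ^ 2 by positivity)).const_mul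
        (2 * r / Real.sqrt π)
      simpa [neg_mul] using this
    · rw [← IntegrableOn]
      exact integrableOn_const measure_Ioo_lt_top.ne (by simp)
  have hGint : Integrable G
      ((volume.restrict (Set.Ioi (0:ℝ))).prod (volume.restrict (Set.Ioo (-π) π))) := by
    apply Integrable.mono' hbound (hGcont.aestronglyMeasurable)
    filter_upwards with p
    rw [hG]
    simp only
    rw [norm_mul, Complex.norm_exp_ofReal_mul_I, one_mul,
      Complex.norm_real, mul_one]
    rw [Real.norm_eq_abs, abs_of_nonneg (by positivity)]
  rw [htar, Measure.volume_eq_prod, ← Measure.prod_restrict,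
    MeasureTheory.integral_prod_symm G hGint]
  -- now an integral over θ ∈ Ioo (-π) π of H θ
  set H : ℝ → ℂ := fun θ => ∫ σ in Set.Ioi (0:ℝ), G (σ, θ) with hH
  have hHcont : Continuous H := by
    apply MeasureTheory.continuous_of_dominated (bound := fun σ =>
      (2 * r / Real.sqrt π) * Real.exp (-(4 * π ^ 2 * r ^ 2 * σ ^ 2)))
    · intro θ
      exact (hGcont.comp (continuous_id.prodMk continuous_const)).aestronglyMeasurable
    · intro θ
      filter_upwards with σ
      rw [hG]
      simp only
      rw [norm_mul, Complex.norm_exp_ofReal_mul_I, one_mul,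
        Complex.norm_real, Real.norm_eq_abs, abs_of_nonneg (by positivity)]
    · apply Integrable.integrableOn
      have := (integrable_exp_neg_mul_sq (show (0:ℝ) < 4 * π ^ 2 * r ^ 2 by positivity)).const_mul
        (2 * r / Real.sqrt π)
      simpa [neg_mul] using this
    · filter_upwards with σ
      exact hGcont.comp (continuous_const.prodMk continuous_id)
  have hIoo : (∫ θ in Set.Ioo (-π) π, H θ) = ∫ θ in (-π)..π, H θ := by
    rw [intervalIntegral.integral_of_le (by linarith), integral_Ioc_eq_integral_Ioo]
  rw [hIoo]
  rw [← intervalIntegral.integral_add_adjacent_intervals (a := -π) (b := (0:ℝ)) (c := π)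
      (hHcont.intervalIntegrable _ _) (hHcont.intervalIntegrable _ _)]
  have hshift : (∫ θ in (-π)..(0:ℝ), H θ) = ∫ θ in (0:ℝ)..π, H (θ - π) := by
    rw [intervalIntegral.integral_comp_sub_right (fun θ => H θ) π]
    norm_num
  have hi1 : IntervalIntegrable (fun θ => H (θ - π)) volume 0 π := by
    apply Continuous.intervalIntegrable
    exact hHcont.comp (by fun_prop)
  rw [hshift, ← intervalIntegral.integral_add hi1 (hHcont.intervalIntegrable _ _)]
  -- pointwise evaluation
  have hpoint : ∀ θ : ℝ, H (θ - π) + H θ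
      = (((1 / π) * Real.exp (-(T θ) ^ 2 / (4 * r ^ 2)) : ℝ) : ℂ) := by
    intro θ
    set t := T θ with ht
    set f : ℝ → ℂ := fun σ => Complex.exp ((2 * π * (σ * t) : ℝ) * Complex.I) *
      (((2 * r / Real.sqrt π) * Real.exp (-(4 * π ^ 2 * r ^ 2 * σ ^ 2)) : ℝ) : ℂ) with hf
    have hTshift : T (θ - π) = -t := by
      rw [hT, ht]
      simp only [Real.cos_sub, Real.sin_sub, Real.cos_pi, Real.sin_pi]
      ring
    have h1 : H (θ - π) = ∫ σ in Set.Ioi (0:ℝ), f (-σ) := by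
      rw [hH]
      apply MeasureTheory.setIntegral_congr_fun measurableSet_Ioi
      intro σ _
      rw [hG, hf]
      simp only
      rw [hTshift]
      rw [show (2 * π * (σ * -t)) = (2 * π * (-σ * t)) by ring,
        show ((-σ:ℝ)) ^ 2 = σ ^ 2 by ring]
    have h2 : H θ = ∫ σ in Set.Ioi (0:ℝ), f σ := rfl
    rw [h1, h2, integral_comp_neg_Ioi]
    have hint := f_int hr t
    rw [show -(0:ℝ) = 0 by norm_num, hf,
      intervalIntegral.integral_Iic_add_Ioi (hint.integrableOn) (hint.integrableOn)]
    exact gauss_ft hr t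
  calc (∫ θ in (0:ℝ)..π, (H (θ - π) + H θ))
      = ∫ θ in (0:ℝ)..π, (((1 / π) * Real.exp (-(T θ) ^ 2 / (4 * r ^ 2)) : ℝ) : ℂ) := by
        apply intervalIntegral.integral_congr
        intro θ _
        exact hpoint θ
    _ = _ := by
        rw [intervalIntegral.integral_ofReal]

lemma lhs_half (r : ℝ) (hr : 0 < r) (w : ℝ × ℝ) :
    (1 / (2 * Real.pi)) * ∫ θ in (0:ℝ)..(2 * Real.pi),
        Real.exp (-(dot2 (uperp θ) w) ^ 2 / (4 * r ^ 2))
      = (1 / π) * ∫ θ in (0:ℝ)..π,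
          Real.exp (-(w.1 * Real.cos θ + w.2 * Real.sin θ) ^ 2 / (4 * r ^ 2)) := by
  have hπ := Real.pi_pos
  set F : ℝ → ℝ := fun θ => Real.exp (-(dot2 (uperp θ) w) ^ 2 / (4 * r ^ 2)) with hF
  have hFeq : ∀ θ, F θ = Real.exp (-(Real.sin θ * w.1 + -Real.cos θ * w.2) ^ 2 / (4 * r ^ 2)) :=
    fun θ => rfl
  have hFcont : Continuous F := by
    have : F = fun θ => Real.exp (-(Real.sin θ * w.1 + -Real.cos θ * w.2) ^ 2 / (4 * r ^ 2)) :=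
      funext hFeq
    rw [this]; fun_prop
  have hFper : Function.Periodic F π := by
    intro θ
    rw [hFeq, hFeq]
    congr 1
    rw [Real.sin_add, Real.cos_add]
    simp [Real.sin_pi, Real.cos_pi]
    ring
  have hsplit : (∫ θ in (0:ℝ)..(2 * π), F θ) = 2 * ∫ θ in (0:ℝ)..π, F θ := by
    rw [show (2 * π : ℝ) = π + π by ring,
      ← intervalIntegral.integral_add_adjacent_intervals (a := (0:ℝ)) (b := π) (c := π + π)
        (hFcont.intervalIntegrable _ _) (hFcont.intervalIntegrable _ _)]
    have := hFper.intervalIntegral_add_eq π 0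
    rw [zero_add] at this
    rw [this, two_mul]
  have hshift : (∫ θ in (0:ℝ)..π,
        Real.exp (-(w.1 * Real.cos θ + w.2 * Real.sin θ) ^ 2 / (4 * r ^ 2)))
      = ∫ θ in (0:ℝ)..π, F θ := by
    have hpt : Set.EqOn (fun θ : ℝ =>
        Real.exp (-(w.1 * Real.cos θ + w.2 * Real.sin θ) ^ 2 / (4 * r ^ 2)))
        (fun θ : ℝ => F (θ + π / 2)) (Set.uIcc 0 π) := by
      intro θ _
      simp only
      rw [hFeq]
      congr 1
      rw [Real.sin_add, Real.cos_add]
      simp [Real.sin_pi_div_two, Real.cos_pi_div_two]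
      ring
    rw [intervalIntegral.integral_congr hpt,
      intervalIntegral.integral_comp_add_right F (π / 2), zero_add,
      show π + π / 2 = π / 2 + π by ring]
    have := hFper.intervalIntegral_add_eq (π / 2) 0
    rw [zero_add] at this
    rw [this]
  rw [hsplit, hshift]
  field_simp

end Aux

/-- inverse Fourier representation of the averaged project-then-backproject
kernel, whose Fourier multiplier is `(2r/(√π‖ξ‖))·exp(−4π²r²‖ξ‖²)`. -/
theorem avgKernel_fourier_repr (r : ℝ) (hr : 0 < r) (w : ℝ × ℝ) :
    (avgKernel r w : ℂ) =
      ∫ ξ : ℝ × ℝ, Complex.exp ((2 * Real.pi * dot2 ξ w : ℝ) * Complex.I) *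
        ((2 * r / (Real.sqrt Real.pi * norm2 ξ)) *
          Real.exp (-(4 * Real.pi ^ 2 * r ^ 2 * (norm2 ξ) ^ 2)) : ℝ) := by
  rw [rhs_repr hr w]
  norm_cast
  rw [avgKernel]
  have hcg : Set.EqOn
      (fun θ : ℝ => ∫ v : ℝ × ℝ, gauss r (w - v) * lineProj (gauss r) θ (dot2 (uperp θ) v))
      (fun θ : ℝ => Real.exp (-(dot2 (uperp θ) w) ^ 2 / (4 * r ^ 2)))
      (Set.uIcc 0 (2 * Real.pi)) := fun θ _ => conv_gauss hr θ w
  rw [intervalIntegral.integral_congr hcg, lhs_half r hr w,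
    ← intervalIntegral.integral_const_mul]
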